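/- Let a > 0, k ∈ ℕ. For every t ∈ ℂ, the series Σ_{x∈ℕ} (t^x/x!) C_k^{(a)}(x) converges and equals e^t (1 − t/a)^k. -/

import Mathlib

open Real Nat

/-- The Charlier polynomial of parameter `a > 0`:
`C_k^{(a)}(x) = Σ_{j=0}^{k} binom(k,j)·binom(x,j)·j!·(−1/a)^j` for `x ∈ ℕ`. -/
noncomputable def charlier (a : ℝ) (k x : ℕ) : ℝ :=
  ∑ j ∈ Finset.range (k + 1),
    (k.choose j : ℝ) * (x.choose j : ℝ) * (j ! : ℝ) * (-1 / a) ^ j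

lemma exp_hasSum (t : ℂ) : HasSum (fun m : ℕ => t ^ m / (m ! : ℂ)) (Complex.exp t) := by
  have := NormedSpace.expSeries_div_hasSum_exp t
  rwa [← Complex.exp_eq_exp_ℂ] at this

lemma key (t : ℂ) (j : ℕ) :
    HasSum (fun x : ℕ => t ^ x * (x.choose j : ℂ) / (x ! : ℂ))
      (t ^ j / (j ! : ℂ) * Complex.exp t) := by
  have h := (exp_hasSum t).mul_left (t ^ j / (j ! : ℂ))
  have h2 : HasSum (fun m : ℕ => t ^ (m + j) * ((m + j).choose j : ℂ) / ((m + j)! : ℂ))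
      (t ^ j / (j ! : ℂ) * Complex.exp t) := by
    refine h.congr_fun fun m => ?_
    have hfac : ((m + j).choose j : ℂ) * (m ! : ℂ) * (j ! : ℂ) = ((m + j)! : ℂ) := by
      exact_mod_cast congrArg (Nat.cast (R := ℂ)) (Nat.add_choose_mul_factorial_mul_factorial m j)
    have hm : (m ! : ℂ) ≠ 0 := Nat.cast_ne_zero.mpr (Nat.factorial_ne_zero m)
    have hj : (j ! : ℂ) ≠ 0 := Nat.cast_ne_zero.mpr (Nat.factorial_ne_zero j)
    have hmj : ((m + j)! : ℂ) ≠ 0 := Nat.cast_ne_zero.mpr (Nat.factorial_ne_zero _)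
    field_simp
    rw [pow_add]
    rw [← hfac]
    ring
  have h3 := (hasSum_nat_add_iff (f := fun x : ℕ => t ^ x * (x.choose j : ℂ) / (x ! : ℂ)) j).mp h2
  have hz : ∑ i ∈ Finset.range j, t ^ i * (i.choose j : ℂ) / (i ! : ℂ) = 0 := by
    refine Finset.sum_eq_zero fun i hi => ?_
    rw [Nat.choose_eq_zero_of_lt (Finset.mem_range.mp hi)]
    simp
  rwa [hz, add_zero] at h3

/-- For `a > 0`, `k ∈ ℕ` and every `t ∈ ℂ`, the series `Σ_{x∈ℕ} (t^x/x!) C_k^{(a)}(x)`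
converges and equals `e^t (1 − t/a)^k`. -/
theorem charlier_generating_function (a : ℝ) (ha : 0 < a) (k : ℕ) (t : ℂ) :
    HasSum (fun x : ℕ => t ^ x / ((x ! : ℕ) : ℂ) * ((charlier a k x : ℝ) : ℂ))
      (Complex.exp t * (1 - t / (a : ℂ)) ^ k) := by
  have hterm : ∀ j ∈ Finset.range (k + 1),
      HasSum (fun x : ℕ =>
        (k.choose j : ℂ) * ((-1 : ℂ) / a) ^ j * (j ! : ℂ) * (t ^ x * (x.choose j : ℂ) / (x ! : ℂ)))
        ((k.choose j : ℂ) * ((-1 : ℂ) / a) ^ j * (j ! : ℂ) * (t ^ j / (j ! : ℂ) * Complex.exp t)) :=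
    fun j _ => (key t j).mul_left _
  have hsum := hasSum_sum hterm
  have hfun : (fun x : ℕ => ∑ j ∈ Finset.range (k + 1),
      (k.choose j : ℂ) * ((-1 : ℂ) / a) ^ j * (j ! : ℂ) * (t ^ x * (x.choose j : ℂ) / (x ! : ℂ)))
      = fun x : ℕ => t ^ x / ((x ! : ℕ) : ℂ) * ((charlier a k x : ℝ) : ℂ) := by
    funext x
    unfold charlier
    push_cast
    rw [Finset.mul_sum]
    refine Finset.sum_congr rfl fun j _ => ?_
    ring
  rw [hfun] at hsum
  convert hsum using 1
  have hj : ∀ j ∈ Finset.range (k + 1),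
      (k.choose j : ℂ) * ((-1 : ℂ) / a) ^ j * (j ! : ℂ) * (t ^ j / (j ! : ℂ) * Complex.exp t)
      = Complex.exp t * ((-(t / a)) ^ j * 1 ^ (k - j) * (k.choose j : ℂ)) := by
    intro j _
    have hjf : (j ! : ℂ) ≠ 0 := Nat.cast_ne_zero.mpr (Nat.factorial_ne_zero j)
    have ht : (j ! : ℂ) * (t ^ j / (j ! : ℂ) * Complex.exp t) = t ^ j * Complex.exp t := by
      field_simp
    rw [mul_assoc, ht, neg_pow, div_pow]
    ring
  rw [Finset.sum_congr rfl hj, ← Finset.mul_sum, ← add_pow]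
  ring_nf
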